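/- The function W : (ℂ∖{0})² → ℂ defined by W(y_1, y_2) = 3y_1 + y_2 + y_1^{−1} + y_2^{−1} + 5·y_1 y_2^{−1} + y_1^{2} y_2^{−1} has exactly 6 critical points, and each of these critical points is nondegenerate. -/

import Mathlib

/-- The potential function of the monotone fiber `L(1.5,2)` in `X̂₄` with the chosen bulk deformation (energy factor dropped). -/
noncomputable def W : ℂ → ℂ → ℂ := fun y₁ y₂ =>
  3 * y₁ + y₂ + y₁⁻¹ + y₂⁻¹ + 5 * y₁ * y₂⁻¹ + y₁ ^ 2 * y₂⁻¹

/-- A point of `(ℂ∖{0})²` is a critical point of `W` if both partial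
derivatives of `W` vanish there. -/
def IsCritPt (p : ℂ × ℂ) : Prop :=
  p.1 ≠ 0 ∧ p.2 ≠ 0 ∧
    deriv (fun z => W z p.2) p.1 = 0 ∧ deriv (fun z => W p.1 z) p.2 = 0

/-- The Hessian determinant
`(∂²W/∂y₁²)(∂²W/∂y₂²) - (∂²W/∂y₁∂y₂)²` of `W` at a point. -/
noncomputable def hessDet (p : ℂ × ℂ) : ℂ :=
  deriv (deriv (fun z => W z p.2)) p.1 * deriv (deriv (fun z => W p.1 z)) p.2
    - (deriv (fun w => deriv (fun z => W z w) p.1) p.2) ^ 2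

section Aux

open Polynomial

/-! ### Derivative computations -/

lemma hasDeriv1 (y₁ y₂ : ℂ) (h1 : y₁ ≠ 0) :
    HasDerivAt (fun z => W z y₂) (3 - (y₁ ^ 2)⁻¹ + 5 * y₂⁻¹ + 2 * y₁ * y₂⁻¹) y₁ := by
  have h : HasDerivAt (fun z : ℂ => 3 * z + y₂ + z⁻¹ + y₂⁻¹ + 5 * z * y₂⁻¹ + z ^ 2 * y₂⁻¹)
      ((((3 * 1 + -(y₁ ^ 2)⁻¹) + 5 * 1 * y₂⁻¹) + (↑2 * y₁ ^ 1) * y₂⁻¹)) y₁ := by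
    exact (((((hasDerivAt_id y₁).const_mul 3).add_const y₂).add (hasDerivAt_inv h1)).add_const
      y₂⁻¹ |>.add (((hasDerivAt_id y₁).const_mul 5).mul_const y₂⁻¹)).add
      ((hasDerivAt_pow 2 y₁).mul_const y₂⁻¹)
  convert h using 1
  · rfl
  ring

lemma hasDeriv2 (y₁ y₂ : ℂ) (h2 : y₂ ≠ 0) :
    HasDerivAt (fun z => W y₁ z)
      (1 - (y₂ ^ 2)⁻¹ - 5 * y₁ * (y₂ ^ 2)⁻¹ - y₁ ^ 2 * (y₂ ^ 2)⁻¹) y₂ := by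
  have h : HasDerivAt (fun z : ℂ => 3 * y₁ + z + y₁⁻¹ + z⁻¹ + 5 * y₁ * z⁻¹ + y₁ ^ 2 * z⁻¹)
      (((1 + -(y₂ ^ 2)⁻¹) + 5 * y₁ * -(y₂ ^ 2)⁻¹) + y₁ ^ 2 * -(y₂ ^ 2)⁻¹) y₂ := by
    exact (((((hasDerivAt_id y₂).const_add (3 * y₁)).add_const y₁⁻¹).add
      (hasDerivAt_inv h2) |>.add ((hasDerivAt_inv h2).const_mul (5 * y₁))).add
      ((hasDerivAt_inv h2).const_mul (y₁ ^ 2)))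
  convert h using 1
  · rfl
  ring

lemma deriv1 (y₁ y₂ : ℂ) (h1 : y₁ ≠ 0) :
    deriv (fun z => W z y₂) y₁ = 3 - (y₁ ^ 2)⁻¹ + 5 * y₂⁻¹ + 2 * y₁ * y₂⁻¹ :=
  (hasDeriv1 y₁ y₂ h1).deriv

lemma deriv2 (y₁ y₂ : ℂ) (h2 : y₂ ≠ 0) :
    deriv (fun z => W y₁ z) y₂ = 1 - (y₂ ^ 2)⁻¹ - 5 * y₁ * (y₂ ^ 2)⁻¹ - y₁ ^ 2 * (y₂ ^ 2)⁻¹ :=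
  (hasDeriv2 y₁ y₂ h2).deriv

lemma deriv11 (y₁ y₂ : ℂ) (h1 : y₁ ≠ 0) :
    deriv (deriv (fun z => W z y₂)) y₁ = 2 * (y₁ ^ 3)⁻¹ + 2 * y₂⁻¹ := by
  have he : deriv (fun z => W z y₂) =ᶠ[nhds y₁]
      fun z => 3 - (z ^ 2)⁻¹ + 5 * y₂⁻¹ + 2 * z * y₂⁻¹ := by
    filter_upwards [isOpen_ne.eventually_mem h1] with z hz
    exact deriv1 z y₂ hz
  rw [he.deriv_eq]
  have h : HasDerivAt (fun z : ℂ => 3 - (z ^ 2)⁻¹ + 5 * y₂⁻¹ + 2 * z * y₂⁻¹)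
      (((0 - -(↑2 * y₁ ^ 1) / (y₁ ^ 2) ^ 2) + 2 * 1 * y₂⁻¹)) y₁ := by
    exact (((hasDerivAt_const y₁ 3).sub ((hasDerivAt_pow 2 y₁).inv (pow_ne_zero 2 h1))).add_const
      (5 * y₂⁻¹)).add (((hasDerivAt_id y₁).const_mul 2).mul_const y₂⁻¹)
  rw [h.deriv]
  field_simp
  ring

lemma deriv22 (y₁ y₂ : ℂ) (h2 : y₂ ≠ 0) :
    deriv (deriv (fun z => W y₁ z)) y₂ = (2 + 10 * y₁ + 2 * y₁ ^ 2) * (y₂ ^ 3)⁻¹ := by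
  have he : deriv (fun z => W y₁ z) =ᶠ[nhds y₂]
      fun z => 1 - (z ^ 2)⁻¹ - 5 * y₁ * (z ^ 2)⁻¹ - y₁ ^ 2 * (z ^ 2)⁻¹ := by
    filter_upwards [isOpen_ne.eventually_mem h2] with z hz
    exact deriv2 y₁ z hz
  rw [he.deriv_eq]
  have h : HasDerivAt (fun z : ℂ => 1 - (z ^ 2)⁻¹ - 5 * y₁ * (z ^ 2)⁻¹ - y₁ ^ 2 * (z ^ 2)⁻¹)
      (((0 - -(↑2 * y₂ ^ 1) / (y₂ ^ 2) ^ 2) - 5 * y₁ * (-(↑2 * y₂ ^ 1) / (y₂ ^ 2) ^ 2))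
        - y₁ ^ 2 * (-(↑2 * y₂ ^ 1) / (y₂ ^ 2) ^ 2)) y₂ := by
    have hi := (hasDerivAt_pow 2 y₂).inv (pow_ne_zero 2 h2)
    exact (((hasDerivAt_const y₂ 1).sub hi).sub (hi.const_mul (5 * y₁))).sub
      (hi.const_mul (y₁ ^ 2))
  rw [h.deriv]
  field_simp
  ring

lemma deriv12 (y₁ y₂ : ℂ) (h1 : y₁ ≠ 0) (h2 : y₂ ≠ 0) :
    deriv (fun w => deriv (fun z => W z w) y₁) y₂ = -(5 + 2 * y₁) * (y₂ ^ 2)⁻¹ := by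
  have he : (fun w => deriv (fun z => W z w) y₁) =
      fun w => 3 - (y₁ ^ 2)⁻¹ + 5 * w⁻¹ + 2 * y₁ * w⁻¹ := by
    funext w; exact deriv1 y₁ w h1
  rw [he]
  have h : HasDerivAt (fun w : ℂ => 3 - (y₁ ^ 2)⁻¹ + 5 * w⁻¹ + 2 * y₁ * w⁻¹)
      (0 + (5 * -(y₂ ^ 2)⁻¹) + 2 * y₁ * -(y₂ ^ 2)⁻¹) y₂ := by
    exact ((hasDerivAt_const y₂ (3 - (y₁ ^ 2)⁻¹)).add
      ((hasDerivAt_inv h2).const_mul 5)).add ((hasDerivAt_inv h2).const_mul (2 * y₁))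
  rw [h.deriv]
  ring

/-! ### The critical-point polynomial -/

noncomputable def P : Polynomial ℂ :=
  5 * X ^ 6 + 25 * X ^ 5 - 22 * X ^ 4 - 30 * X ^ 3 - 5 * X ^ 2 + 5 * X + 1

lemma evalP (t : ℂ) :
    P.eval t = 5 * t ^ 6 + 25 * t ^ 5 - 22 * t ^ 4 - 30 * t ^ 3 - 5 * t ^ 2 + 5 * t + 1 := by
  simp [P]

lemma natDegreeP : P.natDegree = 6 := by
  unfold P; compute_degree!

lemma Pne : P ≠ 0 := by
  intro h
  have := evalP 0
  rw [h] at this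
  norm_num at this

lemma derivP : derivative P =
    30 * X ^ 5 + 125 * X ^ 4 - 88 * X ^ 3 - 90 * X ^ 2 - 10 * X + 5 := by
  unfold P
  simp [map_ofNat]
  ring

lemma sepP : P.Separable := by
  refine ⟨Polynomial.C (88097206617 : ℂ)⁻¹ *
    (-39767621483 + 448331460480 * X + 674030237730 * X ^ 2 - 748039925300 * X ^ 3
      - 186979890000 * X ^ 4),
    Polynomial.C (88097206617 : ℂ)⁻¹ *
    (25572965620 + 1247260627 * X - 160097227095 * X ^ 2 - 162356089080 * X ^ 3
      + 150642750050 * X ^ 4 + 31163315000 * X ^ 5), ?_⟩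
  rw [derivP]
  have hC : (Polynomial.C (88097206617 : ℂ)⁻¹) * 88097206617 = 1 := by
    rw [show ((88097206617 : Polynomial ℂ)) = Polynomial.C (88097206617 : ℂ) from
      (map_ofNat Polynomial.C 88097206617).symm, ← Polynomial.C_mul]
    norm_num
  calc Polynomial.C (88097206617 : ℂ)⁻¹ *
        (-39767621483 + 448331460480 * X + 674030237730 * X ^ 2 - 748039925300 * X ^ 3
          - 186979890000 * X ^ 4) * P +
      Polynomial.C (88097206617 : ℂ)⁻¹ *
        (25572965620 + 1247260627 * X - 160097227095 * X ^ 2 - 162356089080 * X ^ 3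
          + 150642750050 * X ^ 4 + 31163315000 * X ^ 5) *
        (30 * X ^ 5 + 125 * X ^ 4 - 88 * X ^ 3 - 90 * X ^ 2 - 10 * X + 5)
      = Polynomial.C (88097206617 : ℂ)⁻¹ * 88097206617 := by unfold P; ring
    _ = 1 := hC

lemma cardRoots : ({t : ℂ | P.eval t = 0}).ncard = 6 := by
  have h1 : {t : ℂ | P.eval t = 0} = (P.roots.toFinset : Set ℂ) := by
    ext t
    simp [Polynomial.mem_roots, Pne, Polynomial.IsRoot]
  rw [h1, Set.ncard_coe_finset,
    Multiset.toFinset_card_of_nodup (Polynomial.nodup_roots sepP),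
    Polynomial.splits_iff_card_roots.mp (IsAlgClosed.splits P), natDegreeP]

lemma ne_zero_of_root {t : ℂ}
    (hp : 5 * t ^ 6 + 25 * t ^ 5 - 22 * t ^ 4 - 30 * t ^ 3 - 5 * t ^ 2 + 5 * t + 1 = 0) :
    t ≠ 0 := by
  intro h
  rw [h] at hp
  norm_num at hp

lemma ne3_of_root {t : ℂ}
    (hp : 5 * t ^ 6 + 25 * t ^ 5 - 22 * t ^ 4 - 30 * t ^ 3 - 5 * t ^ 2 + 5 * t + 1 = 0) :
    1 - 3 * t ^ 2 ≠ 0 := by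
  intro h
  have : (5041 : ℂ) = 0 := by
    linear_combination (-2133 + 1620 * t) * hp +
      (7174 + 9045 * t + 2757 * t ^ 2 - 28755 * t ^ 3 + 9945 * t ^ 4 + 2700 * t ^ 5) * h
  norm_num at this

lemma ne5_of_root {t : ℂ}
    (hp : 5 * t ^ 6 + 25 * t ^ 5 - 22 * t ^ 4 - 30 * t ^ 3 - 5 * t ^ 2 + 5 * t + 1 = 0) :
    5 + 2 * t ≠ 0 := by
  intro h
  have : (105861 : ℂ) = 0 := by
    linear_combination (-64 : ℂ) * hp +
      (21185 - 8410 * t + 3300 * t ^ 2 - 1704 * t ^ 3 + 400 * t ^ 4 + 160 * t ^ 5) * h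
  norm_num at this

lemma nes_of_root {t : ℂ}
    (hp : 5 * t ^ 6 + 25 * t ^ 5 - 22 * t ^ 4 - 30 * t ^ 3 - 5 * t ^ 2 + 5 * t + 1 = 0)
    (hs : 20 * t ^ 2 + 87 * t ^ 3 + 60 * t ^ 4 + 71 * t ^ 5 = 0) : False := by
  have : (1240805727 : ℂ) = 0 := by
    linear_combination (1240805727 - 6204028635 * t - 125097393390 * t ^ 2
        - 72969120295 * t ^ 3 - 114264167512 * t ^ 4) * hp +
      (8116078260 - 71934637 * t - 39295335660 * t ^ 2 - 43359330729 * t ^ 3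
        + 38572442925 * t ^ 4 + 8046772360 * t ^ 5) * hs
  norm_num at this

/-! ### Characterization of the critical points -/

/-- Parametrization of critical points by roots of `P`. -/
noncomputable def Φ (t : ℂ) : ℂ × ℂ := (t, (5 + 2 * t) * t ^ 2 / (1 - 3 * t ^ 2))

lemma crit_iff (p : ℂ × ℂ) : IsCritPt p ↔ (P.eval p.1 = 0 ∧ p = Φ p.1) := by
  obtain ⟨y₁, y₂⟩ := p
  simp only [IsCritPt, Φ, Prod.mk.injEq, Prod.fst, Prod.snd]
  constructor
  · rintro ⟨h1, h2, d1, d2⟩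
    rw [deriv1 y₁ y₂ h1] at d1
    rw [deriv2 y₁ y₂ h2] at d2
    field_simp at d1 d2
    -- d1 : ((3 * y₁ ^ 2 - 1) * y₂ + 5 * y₁ ^ 2) * y₂ + 2 * y₁ * (y₁ ^ 2 * y₂) = 0
    -- d2 : y₂ ^ 2 - 1 - 5 * y₁ - y₁ ^ 2 = 0
    have e1 : y₂ * (1 - 3 * y₁ ^ 2) = (5 + 2 * y₁) * y₁ ^ 2 := by
      have h := mul_right_cancel₀ h2
        (show (y₂ * (1 - 3 * y₁ ^ 2) - (5 + 2 * y₁) * y₁ ^ 2) * y₂ = 0 * y₂ by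
          linear_combination -y₂ * d1)
      linear_combination h
    have e2 : y₂ ^ 2 = 1 + 5 * y₁ + y₁ ^ 2 := by linear_combination d2
    have h3 : 1 - 3 * y₁ ^ 2 ≠ 0 := by
      intro h
      have h5 : (5 + 2 * y₁) * y₁ ^ 2 = 0 := by
        rw [← e1, h, mul_zero]
      rcases mul_eq_zero.mp h5 with h5 | h5
      · have hy : y₁ = -5 / 2 := by linear_combination h5 / 2
        rw [hy] at h
        norm_num at h
      · exact h1 (pow_eq_zero_iff (by norm_num) |>.mp h5)
    refine ⟨?_, trivial, ?_⟩
    · rw [evalP]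
      linear_combination (y₂ * (1 - 3 * y₁ ^ 2) + (5 + 2 * y₁) * y₁ ^ 2) * e1 -
        (1 - 3 * y₁ ^ 2) ^ 2 * e2
    · rw [eq_div_iff h3]
      linear_combination e1
  · rintro ⟨hp, -, hy2⟩
    rw [evalP] at hp
    have h1 : y₁ ≠ 0 := ne_zero_of_root hp
    have h3 : 1 - 3 * y₁ ^ 2 ≠ 0 := ne3_of_root hp
    have h5 : 5 + 2 * y₁ ≠ 0 := ne5_of_root hp
    have h2 : y₂ ≠ 0 := by
      rw [hy2]
      exact div_ne_zero (mul_ne_zero h5 (pow_ne_zero 2 h1)) h3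
    have e1 : y₂ * (1 - 3 * y₁ ^ 2) = (5 + 2 * y₁) * y₁ ^ 2 := by
      rw [hy2, div_mul_cancel₀ _ h3]
    have key : y₂ ^ 2 * (1 - 3 * y₁ ^ 2) ^ 2 = (1 + 5 * y₁ + y₁ ^ 2) * (1 - 3 * y₁ ^ 2) ^ 2 := by
      linear_combination (y₂ * (1 - 3 * y₁ ^ 2) + (5 + 2 * y₁) * y₁ ^ 2) * e1 - hp
    have e2 : y₂ ^ 2 = 1 + 5 * y₁ + y₁ ^ 2 :=
      mul_right_cancel₀ (pow_ne_zero 2 h3) key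
    refine ⟨h1, h2, ?_, ?_⟩
    · rw [deriv1 y₁ y₂ h1]
      field_simp
      linear_combination -e1
    · rw [deriv2 y₁ y₂ h2]
      field_simp
      linear_combination e2

lemma crit_facts {y₁ y₂ : ℂ} (h : IsCritPt (y₁, y₂)) :
    y₁ ≠ 0 ∧ y₂ ≠ 0 ∧
      5 * y₁ ^ 6 + 25 * y₁ ^ 5 - 22 * y₁ ^ 4 - 30 * y₁ ^ 3 - 5 * y₁ ^ 2 + 5 * y₁ + 1 = 0 ∧
      y₂ * (1 - 3 * y₁ ^ 2) = (5 + 2 * y₁) * y₁ ^ 2 ∧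
      y₂ ^ 2 = 1 + 5 * y₁ + y₁ ^ 2 := by
  obtain ⟨hp, heq⟩ := (crit_iff (y₁, y₂)).mp h
  rw [evalP] at hp
  have h1 : y₁ ≠ 0 := ne_zero_of_root hp
  have h3 : 1 - 3 * y₁ ^ 2 ≠ 0 := ne3_of_root hp
  have h5 : 5 + 2 * y₁ ≠ 0 := ne5_of_root hp
  have hy2 : y₂ = (5 + 2 * y₁) * y₁ ^ 2 / (1 - 3 * y₁ ^ 2) := congrArg Prod.snd heq
  have h2 : y₂ ≠ 0 := by
    rw [hy2]
    exact div_ne_zero (mul_ne_zero h5 (pow_ne_zero 2 h1)) h3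
  have e1 : y₂ * (1 - 3 * y₁ ^ 2) = (5 + 2 * y₁) * y₁ ^ 2 := by
    rw [hy2, div_mul_cancel₀ _ h3]
  have key : y₂ ^ 2 * (1 - 3 * y₁ ^ 2) ^ 2 = (1 + 5 * y₁ + y₁ ^ 2) * (1 - 3 * y₁ ^ 2) ^ 2 := by
    linear_combination (y₂ * (1 - 3 * y₁ ^ 2) + (5 + 2 * y₁) * y₁ ^ 2) * e1 - hp
  exact ⟨h1, h2, hp, e1, mul_right_cancel₀ (pow_ne_zero 2 h3) key⟩

end Aux

/-- `W` has exactly 6 critical points in `(ℂ∖{0})²`, and each of them is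
nondegenerate (nonvanishing Hessian determinant). -/
theorem W_critical_points :
    {p : ℂ × ℂ | IsCritPt p}.ncard = 6 ∧
      ∀ p : ℂ × ℂ, IsCritPt p → hessDet p ≠ 0 := by
  constructor
  · have hset : {p : ℂ × ℂ | IsCritPt p} = Φ '' {t : ℂ | Polynomial.eval t P = 0} := by
      ext p
      rw [Set.mem_setOf_eq, crit_iff]
      constructor
      · rintro ⟨hp, heq⟩
        exact ⟨p.1, hp, heq.symm⟩
      · rintro ⟨t, ht, rfl⟩
        exact ⟨ht, rfl⟩
    rw [hset, Set.ncard_image_of_injective _ (fun a b hab => congrArg Prod.fst hab)]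
    exact cardRoots
  · rintro ⟨y₁, y₂⟩ h
    obtain ⟨h1, h2, hp, e1, e2⟩ := crit_facts h
    intro hh
    rw [hessDet] at hh
    simp only at hh
    rw [deriv11 y₁ y₂ h1, deriv22 y₁ y₂ h2, deriv12 y₁ y₂ h1 h2] at hh
    field_simp at hh
    -- derive the degenerate-locus polynomial equation
    have hG : 4 * (1 + 5 * y₁ + y₁ ^ 2) * (y₂ + y₁ ^ 3) - (5 + 2 * y₁) ^ 2 * y₁ ^ 3 = 0 :=
      mul_right_cancel₀ (pow_ne_zero 4 h2)
        (show (4 * (1 + 5 * y₁ + y₁ ^ 2) * (y₂ + y₁ ^ 3) - (5 + 2 * y₁) ^ 2 * y₁ ^ 3) * y₂ ^ 4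
            = 0 * y₂ ^ 4 by linear_combination y₂ ^ 4 * hh)
    have hs : 20 * y₁ ^ 2 + 87 * y₁ ^ 3 + 60 * y₁ ^ 4 + 71 * y₁ ^ 5 = 0 := by
      linear_combination (1 - 3 * y₁ ^ 2) * hG - 4 * (1 + 5 * y₁ + y₁ ^ 2) * e1
    exact nes_of_root hp hs
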